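/- The set of local bisections of a (discrete) groupoid G, under subset multiplication AB = {ab : a ∈ A, b ∈ B, ab defined}, forms a Boolean inverse ∧-semigroup: it is an inverse semigroup with zero (the empty set), binary compatible joins given by union, binary meets given by intersection, and its idempotents (the subsets of identities) form a generalized Boolean algebra. -/

import Mathlib

namespace InvPaper

open CategoryTheory

variable {C : Type*} [Groupoid C]

/-- The set of arrows of the groupoid with objects `C`. -/
abbrev GArr (C : Type*) [Groupoid C] := Σ a b : C, a ⟶ b

/-- Composition of arrows `x`, `y` given a proof they are composable. -/
def garrComp (x y : GArr C) (h : x.2.1 = y.1) : GArr C :=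
  ⟨x.1, y.2.1, x.2.2 ≫ eqToHom h ≫ y.2.2⟩

/-- Subset multiplication: `AB = {xy : x ∈ A, y ∈ B, xy defined}`. -/
def gSetMul (A B : Set (GArr C)) : Set (GArr C) :=
  {z | ∃ x ∈ A, ∃ y ∈ B, ∃ h : x.2.1 = y.1, z = garrComp x y h}

/-- Inversion of a subset: `A⁻¹ = {x⁻¹ : x ∈ A}`. -/
def gSetInv (A : Set (GArr C)) : Set (GArr C) :=
  {z | ∃ x ∈ A, z = ⟨x.2.1, x.1, Groupoid.inv x.2.2⟩}

/-- An arrow is an identity of the groupoid. -/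
def IsIdentityArr (z : GArr C) : Prop := ∃ h : z.1 = z.2.1, z.2.2 = eqToHom h

/-- A local bisection: `A⁻¹A` and `AA⁻¹` consist only of identities. -/
def IsLocalBisection (A : Set (GArr C)) : Prop :=
  (∀ z ∈ gSetMul (gSetInv A) A, IsIdentityArr z) ∧
    (∀ z ∈ gSetMul A (gSetInv A), IsIdentityArr z)

/-! ### Auxiliary lemmas -/

lemma srcInj_of_id {A B : Set (GArr C)}
    (h : ∀ z ∈ gSetMul (gSetInv A) B, IsIdentityArr z) :
    ∀ x ∈ A, ∀ y ∈ B, x.1 = y.1 → x = y := by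
  rintro ⟨a, b, f⟩ hx ⟨a', b', g⟩ hy (rfl : a = a')
  obtain ⟨h1, h2⟩ := h (garrComp ⟨b, a, Groupoid.inv f⟩ ⟨a, b', g⟩ rfl)
    ⟨_, ⟨_, hx, rfl⟩, _, hy, rfl, rfl⟩
  simp only [garrComp] at h1 h2
  subst h1
  simp only [eqToHom_refl, Category.id_comp] at h2
  have : g = f := by
    have := congrArg (fun t => f ≫ t) h2
    simpa using this
  subst this
  rfl

lemma id_of_srcInj {A B : Set (GArr C)}
    (h : ∀ x ∈ A, ∀ y ∈ B, x.1 = y.1 → x = y) :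
    ∀ z ∈ gSetMul (gSetInv A) B, IsIdentityArr z := by
  rintro z ⟨xi, ⟨x, hx, rfl⟩, y, hy, hc, rfl⟩
  obtain rfl := h x hx y hy hc
  obtain ⟨a, b, f⟩ := x
  exact ⟨rfl, by simp [garrComp]; exact (eqToHom_refl _ _).symm⟩

lemma tgtInj_of_id {A B : Set (GArr C)}
    (h : ∀ z ∈ gSetMul A (gSetInv B), IsIdentityArr z) :
    ∀ x ∈ A, ∀ y ∈ B, x.2.1 = y.2.1 → x = y := by
  rintro ⟨a, b, f⟩ hx ⟨a', b', g⟩ hy (rfl : b = b')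
  obtain ⟨h1, h2⟩ := h (garrComp ⟨a, b, f⟩ ⟨b, a', Groupoid.inv g⟩ rfl)
    ⟨_, hx, _, ⟨_, hy, rfl⟩, rfl, rfl⟩
  simp only [garrComp] at h1 h2
  subst h1
  simp only [eqToHom_refl, Category.id_comp] at h2
  have : f = g := by
    have := congrArg (fun t => t ≫ g) h2
    simpa using this
  subst this
  rfl

lemma id_of_tgtInj {A B : Set (GArr C)}
    (h : ∀ x ∈ A, ∀ y ∈ B, x.2.1 = y.2.1 → x = y) :
    ∀ z ∈ gSetMul A (gSetInv B), IsIdentityArr z := by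
  rintro z ⟨x, hx, yi, ⟨y, hy, rfl⟩, hc, rfl⟩
  obtain rfl := h x hx y hy hc
  obtain ⟨a, b, f⟩ := x
  exact ⟨rfl, by simp [garrComp]; exact (eqToHom_refl _ _).symm⟩

lemma isLocalBisection_iff {A : Set (GArr C)} :
    IsLocalBisection A ↔
      (∀ x ∈ A, ∀ y ∈ A, x.1 = y.1 → x = y) ∧
      (∀ x ∈ A, ∀ y ∈ A, x.2.1 = y.2.1 → x = y) :=
  ⟨fun h => ⟨srcInj_of_id h.1, tgtInj_of_id h.2⟩,
   fun h => ⟨id_of_srcInj h.1, id_of_tgtInj h.2⟩⟩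

lemma bisection_mono {A B : Set (GArr C)} (hBA : B ⊆ A)
    (hA : IsLocalBisection A) : IsLocalBisection B := by
  rw [isLocalBisection_iff] at hA ⊢
  exact ⟨fun x hx y hy h => hA.1 x (hBA hx) y (hBA hy) h,
    fun x hx y hy h => hA.2 x (hBA hx) y (hBA hy) h⟩

lemma garrComp_assoc (x y z : GArr C) (h : x.2.1 = y.1) (h' : y.2.1 = z.1) :
    garrComp (garrComp x y h) z h' = garrComp x (garrComp y z h') h := by
  obtain ⟨a, b, f⟩ := x; obtain ⟨b', c, g⟩ := y; obtain ⟨c', d, k⟩ := z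
  cases h; cases h'; simp [garrComp]

lemma garrComp_id_left (w z : GArr C) (hw : IsIdentityArr w) (h : w.2.1 = z.1) :
    garrComp w z h = z := by
  obtain ⟨a, b, e⟩ := w
  obtain ⟨h1, h2⟩ := hw
  cases h1; cases h
  obtain ⟨a, c, g⟩ := z
  simp only at h2
  simp [garrComp, h2]

lemma garrComp_id_right (z w : GArr C) (hw : IsIdentityArr w) (h : z.2.1 = w.1) :
    garrComp z w h = z := by
  obtain ⟨a, b, e⟩ := w
  obtain ⟨h1, h2⟩ := hw
  cases h1; cases h
  obtain ⟨c, a, g⟩ := z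
  simp only at h2
  simp [garrComp, h2]

lemma idset_mul {E F : Set (GArr C)} (hE : ∀ z ∈ E, IsIdentityArr z)
    (hF : ∀ z ∈ F, IsIdentityArr z) : gSetMul E F = E ∩ F := by
  ext z
  constructor
  · rintro ⟨x, hx, y, hy, hc, rfl⟩
    obtain ⟨hx1, hx2⟩ := hE x hx
    obtain ⟨hy1, hy2⟩ := hF y hy
    obtain ⟨a, b, f⟩ := x; obtain ⟨a', b', g⟩ := y
    simp only at hx1 hy1 hc
    subst hx1; subst hy1; subst hc
    simp only at hx2 hy2
    subst hx2; subst hy2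
    constructor
    · simpa [garrComp] using hx
    · simpa [garrComp] using hy
  · rintro ⟨hzE, hzF⟩
    obtain ⟨h1, h2⟩ := hE z hzE
    obtain ⟨a, b, f⟩ := z
    simp only at h1; subst h1
    simp only at h2; subst h2
    exact ⟨_, hzE, _, hzF, rfl, by simp [garrComp]⟩

lemma mem_id_of_idem {E : Set (GArr C)} (hE : IsLocalBisection E)
    (hEE : gSetMul E E = E) : ∀ z ∈ E, IsIdentityArr z := by
  intro z hz
  obtain ⟨hsrc, htgt⟩ := isLocalBisection_iff.mp hE
  have hz' := hz
  rw [← hEE] at hz'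
  obtain ⟨x, hx, y, hy, hc, hprod⟩ := hz'
  -- z and x have the same source
  have hzx : z = x := hsrc z hz x hx (by rw [hprod]; rfl)
  have hzy : z = y := htgt z hz y hy (by rw [hprod]; rfl)
  subst hzx; subst hzy
  -- z = garrComp z z hc
  obtain ⟨a, b, f⟩ := z
  have hc' : b = a := hc
  subst hc'
  refine ⟨rfl, ?_⟩
  simp only [garrComp, eqToHom_refl, Category.id_comp] at hprod
  have h3 : f ≫ f = f := by
    injection hprod with h1 h2
    injection h2 with h3 h4
    exact h4.symm
  have : f = 𝟙 b := by
    have := congrArg (fun t => t ≫ Groupoid.inv f) h3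
    simpa using this
  simpa using this

/-- The local bisections of a (discrete) groupoid form a Boolean
inverse ∧-semigroup under subset multiplication: they are closed under products and
inverses, form an inverse semigroup with zero `∅` (idempotents commuting), binary
compatible joins are given by union, binary meets by intersection, and the
idempotents (subsets of identities) form a generalized Boolean algebra
(relative complements exist, given by set difference). -/
theorem stmt13 :
    -- closure under multiplication and inversion
    (∀ A B : Set (GArr C), IsLocalBisection A → IsLocalBisection B →
      IsLocalBisection (gSetMul A B)) ∧
    (∀ A : Set (GArr C), IsLocalBisection A → IsLocalBisection (gSetInv A)) ∧
    -- associativity of subset multiplication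
    (∀ A B D : Set (GArr C), gSetMul (gSetMul A B) D = gSetMul A (gSetMul B D)) ∧
    -- regularity: A A⁻¹ A = A and A⁻¹ A A⁻¹ = A⁻¹
    (∀ A : Set (GArr C), IsLocalBisection A →
      gSetMul (gSetMul A (gSetInv A)) A = A ∧
      gSetMul (gSetMul (gSetInv A) A) (gSetInv A) = gSetInv A) ∧
    -- idempotents commute (inverse semigroup)
    (∀ E F : Set (GArr C), IsLocalBisection E → IsLocalBisection F →
      gSetMul E E = E → gSetMul F F = F → gSetMul E F = gSetMul F E) ∧
    -- the empty set is a local bisection and is a zero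
    IsLocalBisection (∅ : Set (GArr C)) ∧
    (∀ A : Set (GArr C), gSetMul ∅ A = ∅ ∧ gSetMul A ∅ = ∅) ∧
    -- binary compatible joins are given by union
    (∀ A B : Set (GArr C), IsLocalBisection A → IsLocalBisection B →
      (∀ z ∈ gSetMul (gSetInv A) B, IsIdentityArr z) →
      (∀ z ∈ gSetMul A (gSetInv B), IsIdentityArr z) →
      IsLocalBisection (A ∪ B)) ∧
    -- binary meets are given by intersection
    (∀ A B : Set (GArr C), IsLocalBisection A → IsLocalBisection B →
      IsLocalBisection (A ∩ B)) ∧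
    -- the idempotents (sets of identities) form a generalized Boolean algebra
    (∀ A B : Set (GArr C), IsLocalBisection A → IsLocalBisection B →
      (∀ z ∈ A, IsIdentityArr z) → (∀ z ∈ B, IsIdentityArr z) → A ⊆ B →
      IsLocalBisection (B \ A) ∧ (∀ z ∈ B \ A, IsIdentityArr z) ∧
        A ∪ (B \ A) = B ∧ A ∩ (B \ A) = ∅) := by
  refine ⟨?_, ?_, ?_, ?_, ?_, ?_, ?_, ?_, ?_, ?_⟩
  · -- closure under multiplication
    intro A B hA hB
    obtain ⟨hAs, hAt⟩ := isLocalBisection_iff.mp hA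
    obtain ⟨hBs, hBt⟩ := isLocalBisection_iff.mp hB
    rw [isLocalBisection_iff]
    constructor
    · rintro z ⟨x, hx, y, hy, hc, rfl⟩ z' ⟨x', hx', y', hy', hc', rfl⟩ hsrc
      obtain rfl := hAs x hx x' hx' hsrc
      obtain rfl := hBs y hy y' hy' (hc.symm.trans hc')
      rfl
    · rintro z ⟨x, hx, y, hy, hc, rfl⟩ z' ⟨x', hx', y', hy', hc', rfl⟩ htgt
      obtain rfl := hBt y hy y' hy' htgt
      obtain rfl := hAt x hx x' hx' (hc.trans hc'.symm)
      rfl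
  · -- closure under inversion
    intro A hA
    obtain ⟨hAs, hAt⟩ := isLocalBisection_iff.mp hA
    rw [isLocalBisection_iff]
    constructor
    · rintro z ⟨x, hx, rfl⟩ z' ⟨x', hx', rfl⟩ h
      obtain rfl := hAt x hx x' hx' h
      rfl
    · rintro z ⟨x, hx, rfl⟩ z' ⟨x', hx', rfl⟩ h
      obtain rfl := hAs x hx x' hx' h
      rfl
  · -- associativity
    intro A B D
    ext z
    constructor
    · rintro ⟨w, ⟨x, hx, y, hy, h, rfl⟩, u, hu, h', rfl⟩
      exact ⟨x, hx, garrComp y u h', ⟨y, hy, u, hu, h', rfl⟩, h,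
        (garrComp_assoc x y u h h')⟩
    · rintro ⟨x, hx, w, ⟨y, hy, u, hu, h', rfl⟩, h, rfl⟩
      exact ⟨garrComp x y h, ⟨x, hx, y, hy, h, rfl⟩, u, hu, h',
        (garrComp_assoc x y u h h').symm⟩
  · -- regularity
    intro A hA
    constructor
    · ext z
      constructor
      · rintro ⟨w, hw, x, hx, h, rfl⟩
        rw [garrComp_id_left w x (hA.2 w hw) h]
        exact hx
      · intro hz
        obtain ⟨a, b, f⟩ := z
        refine ⟨garrComp ⟨a, b, f⟩ ⟨b, a, Groupoid.inv f⟩ rfl,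
          ⟨_, hz, _, ⟨_, hz, rfl⟩, rfl, rfl⟩, ⟨a, b, f⟩, hz, rfl, ?_⟩
        simp [garrComp]
      
    · ext z
      constructor
      · rintro ⟨w, hw, x, hx, h, rfl⟩
        rw [garrComp_id_left w x (hA.1 w hw) h]
        exact hx
      · rintro ⟨⟨a, b, f⟩, hx, rfl⟩
        refine ⟨garrComp ⟨b, a, Groupoid.inv f⟩ ⟨a, b, f⟩ rfl,
          ⟨_, ⟨_, hx, rfl⟩, _, hx, rfl, rfl⟩, _, ⟨_, hx, rfl⟩, rfl, ?_⟩
        simp [garrComp]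
  · -- idempotents commute
    intro E F hE hF hEE hFF
    have hE' := mem_id_of_idem hE hEE
    have hF' := mem_id_of_idem hF hFF
    rw [idset_mul hE' hF', idset_mul hF' hE', Set.inter_comm]
  · -- empty set is a local bisection
    exact ⟨fun z hz => by rcases hz with ⟨x, hx, y, hy, -⟩; exact absurd hy (by simp),
      fun z hz => by rcases hz with ⟨x, hx, -⟩; exact absurd hx (by simp)⟩
  · -- empty set is a zero
    intro A
    constructor
    · ext z; simp [gSetMul]
    · ext z; simp [gSetMul]
  · -- union of compatible bisections
    intro A B hA hB h1 h2
    obtain ⟨hAs, hAt⟩ := isLocalBisection_iff.mp hA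
    obtain ⟨hBs, hBt⟩ := isLocalBisection_iff.mp hB
    have hABs := srcInj_of_id h1
    have hABt := tgtInj_of_id h2
    rw [isLocalBisection_iff]
    constructor
    · rintro x (hx | hx) y (hy | hy) h
      · exact hAs x hx y hy h
      · exact hABs x hx y hy h
      · exact (hABs y hy x hx h.symm).symm
      · exact hBs x hx y hy h
    · rintro x (hx | hx) y (hy | hy) h
      · exact hAt x hx y hy h
      · exact hABt x hx y hy h
      · exact (hABt y hy x hx h.symm).symm
      · exact hBt x hx y hy h
  · -- intersections
    intro A B hA hB
    exact bisection_mono Set.inter_subset_left hA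
  · -- generalized Boolean algebra of idempotents
    intro A B hA hB hAid hBid hAB
    refine ⟨bisection_mono Set.diff_subset hB,
      fun z hz => hBid z hz.1, Set.union_diff_cancel hAB, ?_⟩
    ext z
    simp only [Set.mem_inter_iff, Set.mem_diff, Set.mem_empty_iff_false, iff_false]
    tauto

end InvPaper
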